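/- For every positive natural number ℓ, the ℓ functions x ↦ N_ℓ(x + k) for k = 0, 1, …, ℓ − 1, regarded as functions on the interval [0,1], are linearly independent over ℝ: if c₀, …, c_{ℓ−1} ∈ ℝ satisfy Σ_{k=0}^{ℓ−1} c_k · N_ℓ(x + k) = 0 for all x ∈ [0,1], then c₀ = ⋯ = c_{ℓ−1} = 0. -/

import Mathlib

open MeasureTheory

/-- The B-spline of order `ℓ`: `N₁` is the indicator of `[0,1]` and
`N_{ℓ+1}(x) = ∫₀¹ N_ℓ(x - t) dt`. The value for `ℓ = 0` is irrelevant. -/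
noncomputable def bspline : ℕ → ℝ → ℝ
  | 0, _ => 0
  | 1, x => if x ∈ Set.Icc (0 : ℝ) 1 then 1 else 0
  | (n + 2), x => ∫ t in (0 : ℝ)..1, bspline (n + 1) (x - t)

lemma bspline_nonneg : ∀ (n : ℕ) (x : ℝ), 0 ≤ bspline n x
  | 0, x => le_refl 0
  | 1, x => by unfold bspline; split <;> norm_num
  | (n + 2), x => by
    show 0 ≤ ∫ t in (0:ℝ)..1, bspline (n+1) (x - t)
    exact intervalIntegral.integral_nonneg zero_le_one
      (fun u _ => bspline_nonneg (n+1) (x - u))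

lemma bspline_le_one : ∀ (n : ℕ) (x : ℝ), bspline n x ≤ 1
  | 0, x => zero_le_one
  | 1, x => by unfold bspline; split <;> norm_num
  | (n + 2), x => by
    show (∫ t in (0:ℝ)..1, bspline (n+1) (x - t)) ≤ 1
    have := intervalIntegral.norm_integral_le_of_norm_le_const (a := (0:ℝ)) (b := 1)
      (C := 1) (f := fun t => bspline (n+1) (x - t)) (fun u _ => by
        rw [Real.norm_eq_abs, abs_of_nonneg (bspline_nonneg _ _)]
        exact bspline_le_one (n+1) (x - u))
    simp only [sub_zero, abs_one, mul_one] at this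
    exact (le_abs_self _).trans ((Real.norm_eq_abs _) ▸ this)

lemma intervalIntegrable_of_bounded {f : ℝ → ℝ} (hm : Measurable f)
    (h0 : ∀ x, 0 ≤ f x) (h1 : ∀ x, f x ≤ 1) (a b : ℝ) :
    IntervalIntegrable f volume a b := by
  rw [intervalIntegrable_iff]
  have : IsFiniteMeasure (volume.restrict (Set.uIoc a b)) :=
    ⟨by rw [Measure.restrict_apply_univ]; exact measure_Ioc_lt_top⟩
  refine Integrable.mono' (integrable_const 1) hm.aestronglyMeasurable ?_
  filter_upwards with y
  rw [Real.norm_eq_abs, abs_of_nonneg (h0 y)]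
  exact h1 y

lemma bspline_measurable : ∀ n : ℕ, Measurable (bspline n)
  | 0 => measurable_const
  | 1 => by
    show Measurable fun x => if x ∈ Set.Icc (0:ℝ) 1 then (1:ℝ) else 0
    exact Measurable.ite measurableSet_Icc measurable_const measurable_const
  | (n + 2) => by
    have hm := bspline_measurable (n + 1)
    have hint : ∀ a b : ℝ, IntervalIntegrable (bspline (n+1)) volume a b :=
      intervalIntegrable_of_bounded hm (bspline_nonneg _) (bspline_le_one _)
    have hF : Continuous fun y => ∫ u in (0:ℝ)..y, bspline (n+1) u :=
      intervalIntegral.continuous_primitive hint 0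
    have key : ∀ x : ℝ, bspline (n+2) x =
        (∫ u in (0:ℝ)..x, bspline (n+1) u) - ∫ u in (0:ℝ)..(x-1), bspline (n+1) u := by
      intro x
      show (∫ t in (0:ℝ)..1, bspline (n+1) (x - t)) = _
      rw [intervalIntegral.integral_comp_sub_left (bspline (n+1)) x, sub_zero,
        intervalIntegral.integral_interval_sub_left (hint 0 x) (hint 0 (x-1))]
    simp only [funext key]
    exact (hF.sub (hF.comp (continuous_id.sub continuous_const))).measurable

lemma bspline_intervalIntegrable (n : ℕ) (a b : ℝ) :
    IntervalIntegrable (bspline n) volume a b :=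
  intervalIntegrable_of_bounded (bspline_measurable n) (bspline_nonneg n) (bspline_le_one n) a b

lemma bspline_eq_sub (n : ℕ) (x : ℝ) : bspline (n+2) x =
    (∫ u in (0:ℝ)..x, bspline (n+1) u) - ∫ u in (0:ℝ)..(x-1), bspline (n+1) u := by
  show (∫ t in (0:ℝ)..1, bspline (n+1) (x - t)) = _
  rw [intervalIntegral.integral_comp_sub_left (bspline (n+1)) x, sub_zero,
    intervalIntegral.integral_interval_sub_left (bspline_intervalIntegrable _ 0 x)
      (bspline_intervalIntegrable _ 0 (x-1))]

lemma bspline_continuous (n : ℕ) : Continuous (bspline (n+2)) := by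
  have hF : Continuous fun y => ∫ u in (0:ℝ)..y, bspline (n+1) u :=
    intervalIntegral.continuous_primitive (bspline_intervalIntegrable (n+1)) 0
  simp only [funext (bspline_eq_sub n)]
  exact hF.sub (hF.comp (continuous_id.sub continuous_const))

lemma bspline_zero_of_neg : ∀ (n : ℕ) {x : ℝ}, x < 0 → bspline n x = 0
  | 0, x, _ => rfl
  | 1, x, hx => by
    show (if x ∈ Set.Icc (0:ℝ) 1 then (1:ℝ) else 0) = 0
    rw [if_neg]; intro ⟨h1, _⟩; linarith
  | (n + 2), x, hx => by
    show (∫ t in (0:ℝ)..1, bspline (n+1) (x - t)) = 0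
    rw [intervalIntegral.integral_congr (g := fun _ => (0:ℝ)), intervalIntegral.integral_zero]
    intro t ht
    rw [Set.uIcc_of_le zero_le_one] at ht
    exact bspline_zero_of_neg (n+1) (by cases ht with | intro h1 h2 => linarith)

lemma bspline_zero_of_gt : ∀ (n : ℕ) {x : ℝ}, (n : ℝ) < x → bspline n x = 0
  | 0, x, _ => rfl
  | 1, x, hx => by
    show (if x ∈ Set.Icc (0:ℝ) 1 then (1:ℝ) else 0) = 0
    rw [if_neg]; intro ⟨_, h2⟩; exact absurd hx (by push_cast; linarith)
  | (n + 2), x, hx => by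
    show (∫ t in (0:ℝ)..1, bspline (n+1) (x - t)) = 0
    rw [intervalIntegral.integral_congr (g := fun _ => (0:ℝ)), intervalIntegral.integral_zero]
    intro t ht
    rw [Set.uIcc_of_le zero_le_one] at ht
    refine bspline_zero_of_gt (n+1) ?_
    push_cast at hx ⊢
    cases ht with | intro h1 h2 => linarith

lemma primitive_zero_of_nonpos (n : ℕ) {y : ℝ} (hy : y ≤ 0) :
    (∫ u in (0:ℝ)..y, bspline n u) = 0 := by
  rw [← neg_eq_zero, ← intervalIntegral.integral_symm]
  rw [intervalIntegral.integral_congr_ae (g := fun _ => (0:ℝ))]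
  · exact intervalIntegral.integral_zero
  · have h0 : ∀ᵐ x : ℝ, x ≠ 0 := by simp [MeasureTheory.ae_iff]
    filter_upwards [h0] with x hx hmem
    rcases lt_or_gt_of_ne hx with h | h
    · exact bspline_zero_of_neg n h
    · rw [Set.uIoc_of_le hy] at hmem
      exact absurd hmem.2 (not_le.mpr h)

lemma bspline_lower_bound : ∀ (n : ℕ), ∀ x ∈ Set.Icc (0:ℝ) 1,
    x ^ n / n.factorial ≤ bspline (n+1) x
  | 0, x, hx => by
    show x ^ 0 / (1:ℕ) ≤ if x ∈ Set.Icc (0:ℝ) 1 then (1:ℝ) else 0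
    rw [if_pos hx]; norm_num
  | (n + 1), x, hx => by
    obtain ⟨hx0, hx1⟩ := hx
    rw [bspline_eq_sub, primitive_zero_of_nonpos (n+1) (show x - 1 ≤ (0:ℝ) by linarith), sub_zero]
    have hmono : (∫ u in (0:ℝ)..x, u ^ n / n.factorial) ≤ ∫ u in (0:ℝ)..x, bspline (n+1) u := by
      refine intervalIntegral.integral_mono_on hx0 ?_ (bspline_intervalIntegrable _ 0 x) ?_
      · exact (Continuous.intervalIntegrable (by continuity) 0 x)
      · intro u hu
        exact bspline_lower_bound n u ⟨hu.1, le_trans hu.2 hx1⟩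
    refine le_trans (le_of_eq ?_) hmono
    rw [intervalIntegral.integral_div, integral_pow]
    rw [Nat.factorial_succ]
    push_cast
    field_simp
    simp

lemma bspline_continuousAt (n : ℕ) {x : ℝ} (h0 : x ≠ 0) (h1 : x ≠ 1) :
    ContinuousAt (bspline (n+1)) x := by
  cases n with
  | zero =>
    have : Set.EqOn (bspline 1) (fun y => if y ∈ Set.Icc (0:ℝ) 1 then (1:ℝ) else 0) Set.univ :=
      fun y _ => rfl
    rcases lt_trichotomy x 0 with hx | hx | hx
    · refine ContinuousAt.congr (f := fun _ => (0:ℝ)) continuousAt_const ?_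
      filter_upwards [Iio_mem_nhds hx] with y hy
      exact (bspline_zero_of_neg 1 hy).symm
    · exact absurd hx h0
    rcases lt_trichotomy x 1 with hx1 | hx1 | hx1
    · refine ContinuousAt.congr (f := fun _ => (1:ℝ)) continuousAt_const ?_
      filter_upwards [Ioo_mem_nhds hx hx1] with y hy
      show (1:ℝ) = bspline 1 y
      show (1:ℝ) = if y ∈ Set.Icc (0:ℝ) 1 then (1:ℝ) else 0
      rw [if_pos ⟨le_of_lt hy.1, le_of_lt hy.2⟩]
    · exact absurd hx1 h1
    · refine ContinuousAt.congr (f := fun _ => (0:ℝ)) continuousAt_const ?_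
      filter_upwards [Ioi_mem_nhds hx1] with y hy
      exact (bspline_zero_of_gt 1 (by exact_mod_cast hy)).symm
  | succ m => exact (bspline_continuous m).continuousAt

lemma ne_helper {x : ℝ} (hx0 : 0 < x) (hx1 : x < 1) (k : ℕ) :
    (x + k ≠ 0 ∧ x + k ≠ 1) ∧ (x + ((k:ℝ) - 1) ≠ 0 ∧ x + ((k:ℝ) - 1) ≠ 1) := by
  have hk : (0:ℝ) ≤ k := Nat.cast_nonneg k
  refine ⟨⟨by intro h; linarith, ?_⟩, ?_, ?_⟩
  · rcases Nat.eq_zero_or_pos k with rfl | hpos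
    · push_cast; intro h; linarith
    · have : (1:ℝ) ≤ k := by exact_mod_cast hpos
      intro h; linarith
  · rcases Nat.eq_zero_or_pos k with rfl | hpos
    · push_cast; intro h; linarith
    · have : (1:ℝ) ≤ k := by exact_mod_cast hpos
      intro h; linarith
  · rcases k with _ | _ | k
    · push_cast; intro h; linarith
    · push_cast; intro h; linarith
    · have : (0:ℝ) ≤ (k:ℝ) := Nat.cast_nonneg k
      push_cast; intro h; linarith

lemma bspline_aux : ∀ (m : ℕ) (c : ℕ → ℝ),
    (∀ x ∈ Set.Ioo (0:ℝ) 1, ∑ k ∈ Finset.range (m+1), c k * bspline (m+1) (x + k) = 0) →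
    ∀ k < m + 1, c k = 0 := by
  intro m
  induction m with
  | zero =>
    intro c h k hk
    have hk0 : k = 0 := by omega
    subst hk0
    have h2 := h (1/2) (by norm_num)
    simp only [zero_add, Finset.sum_range_one, Nat.cast_zero, add_zero] at h2
    have hb : bspline 1 (1/2 : ℝ) = 1 := by
      show (if (1/2:ℝ) ∈ Set.Icc (0:ℝ) 1 then (1:ℝ) else 0) = 1
      rw [if_pos (by constructor <;> norm_num)]
    rw [hb, mul_one] at h2
    exact h2
  | succ m ih =>
    intro c h
    set F : ℝ → ℝ := fun y => ∫ u in (0:ℝ)..y, bspline (m+1) u with hF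
    have hG : ∀ y : ℝ, ∑ k ∈ Finset.range (m+2), c k * bspline (m+2) (y + k)
        = ∑ k ∈ Finset.range (m+2), c k * (F (y + k) - F (y + ((k:ℝ) - 1))) := by
      intro y
      refine Finset.sum_congr rfl fun k _ => ?_
      rw [bspline_eq_sub m (y + k), hF, add_sub_assoc]
    have hFd : ∀ p : ℝ, p ≠ 0 → p ≠ 1 → HasDerivAt F (bspline (m+1) p) p := fun p h0 h1 =>
      intervalIntegral.integral_hasDerivAt_right (bspline_intervalIntegrable _ 0 p)
        ((bspline_measurable _).stronglyMeasurable.stronglyMeasurableAtFilter)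
        (bspline_continuousAt m h0 h1)
    -- key derivative identity
    have key : ∀ x ∈ Set.Ioo (0:ℝ) 1,
        ∑ k ∈ Finset.range (m+2),
          c k * (bspline (m+1) (x + k) - bspline (m+1) (x + ((k:ℝ) - 1))) = 0 := by
      intro x hx
      have hD : HasDerivAt
          (fun y => ∑ k ∈ Finset.range (m+2), c k * (F (y + k) - F (y + ((k:ℝ) - 1))))
          (∑ k ∈ Finset.range (m+2),
            c k * (bspline (m+1) (x + k) - bspline (m+1) (x + ((k:ℝ) - 1)))) x := by
        refine HasDerivAt.fun_sum fun k _ => ?_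
        obtain ⟨⟨h10, h11⟩, h20, h21⟩ := ne_helper hx.1 hx.2 k
        exact (((hFd (x + k) h10 h11).comp_add_const x (k:ℝ)).sub
          ((hFd (x + ((k:ℝ) - 1)) h20 h21).comp_add_const x ((k:ℝ) - 1))).const_mul (c k)
      have hz : (fun y => ∑ k ∈ Finset.range (m+2), c k * (F (y + k) - F (y + ((k:ℝ) - 1))))
          =ᶠ[nhds x] fun _ => (0:ℝ) := by
        filter_upwards [Ioo_mem_nhds hx.1 hx.2] with y hy
        rw [← hG y]
        exact h y hy
      have hD0 : HasDerivAt
          (fun y => ∑ k ∈ Finset.range (m+2), c k * (F (y + k) - F (y + ((k:ℝ) - 1))))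
          0 x := (hasDerivAt_const x (0:ℝ)).congr_of_eventuallyEq hz
      exact hD.unique hD0
    -- rearrange
    have key2 : ∀ x ∈ Set.Ioo (0:ℝ) 1,
        ∑ k ∈ Finset.range (m+1), (c k - c (k+1)) * bspline (m+1) (x + k) = 0 := by
      intro x hx
      have hk := key x hx
      have h1 : bspline (m+1) (x + ((m:ℝ) + 1)) = 0 :=
        bspline_zero_of_gt _ (by push_cast; linarith [hx.1])
      have h2 : bspline (m+1) (x + (((0:ℕ):ℝ) - 1)) = 0 :=
        bspline_zero_of_neg _ (by push_cast; linarith [hx.2])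
      simp only [mul_sub] at hk
      rw [Finset.sum_sub_distrib,
        Finset.sum_range_succ (fun k => c k * bspline (m+1) (x + k)) (m+1),
        Finset.sum_range_succ' (fun k => c k * bspline (m+1) (x + ((k:ℝ) - 1))) (m+1)] at hk
      simp only [h1, h2, mul_zero, add_zero, Nat.cast_add, Nat.cast_one,
        add_sub_cancel_right] at hk
      rw [← hk]
      rw [← Finset.sum_sub_distrib]
      exact Finset.sum_congr rfl fun k _ => by ring
    have hd := ih (fun k => c k - c (k+1)) key2
    have hall : ∀ k < m + 2, c k = c 0 := by
      intro k hk
      induction k with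
      | zero => rfl
      | succ j ihj =>
        have hj := hd j (by omega)
        have := sub_eq_zero.mp hj
        rw [← this]
        exact ihj (by omega)
    -- conclude c 0 = 0
    have hhalf := h (1/2) (by norm_num)
    have hsum : ∑ k ∈ Finset.range (m+2), c k * bspline (m+2) ((1:ℝ)/2 + k)
        = c 0 * ∑ k ∈ Finset.range (m+2), bspline (m+2) ((1:ℝ)/2 + k) := by
      rw [Finset.mul_sum]
      exact Finset.sum_congr rfl fun k hk => by
        rw [hall k (Finset.mem_range.mp hk)]
    rw [hsum] at hhalf
    have hpos : 0 < ∑ k ∈ Finset.range (m+2), bspline (m+2) ((1:ℝ)/2 + k) := by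
      have hb : ((1:ℝ)/2) ^ (m+1) / (m+1).factorial ≤ bspline (m+2) ((1:ℝ)/2) :=
        bspline_lower_bound (m+1) (1/2) (by constructor <;> norm_num)
      have h0 : (0:ℝ) < ((1:ℝ)/2) ^ (m+1) / (m+1).factorial := by positivity
      have hle : bspline (m+2) ((1:ℝ)/2 + ((0:ℕ):ℝ))
          ≤ ∑ k ∈ Finset.range (m+2), bspline (m+2) ((1:ℝ)/2 + k) :=
        Finset.single_le_sum (f := fun k : ℕ => bspline (m+2) ((1:ℝ)/2 + k))
          (fun k _ => bspline_nonneg _ _) (Finset.mem_range.mpr (by omega))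
      simp only [Nat.cast_zero, add_zero] at hle
      linarith
    have hc0 : c 0 = 0 := by
      rcases mul_eq_zero.mp hhalf with h' | h'
      · exact h'
      · exact absurd h' (ne_of_gt hpos)
    intro k hk
    rw [hall k hk, hc0]

/-- the functions `x ↦ N_ℓ(x + k)`, `k = 0, …, ℓ - 1`, are linearly
independent on `[0, 1]`. -/
theorem bspline_translates_linearIndependent (ℓ : ℕ) (hℓ : 0 < ℓ) (c : ℕ → ℝ)
    (h : ∀ x ∈ Set.Icc (0 : ℝ) 1, ∑ k ∈ Finset.range ℓ, c k * bspline ℓ (x + k) = 0) :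
    ∀ k < ℓ, c k = 0 := by
  obtain ⟨m, rfl⟩ : ∃ m, ℓ = m + 1 := ⟨ℓ - 1, by omega⟩
  exact bspline_aux m c fun x hx => h x ⟨le_of_lt hx.1, le_of_lt hx.2⟩
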